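/- If the tuple (Ē, Ā, B̄, C̄; K̄) has no selective strong structural fixed modes, then (Ē, Ā, B̄) is selectively strongly structurally controllable (SSSC) and (Ē, Ā, C̄) is selectively strongly structurally observable (SSSO). -/

import Mathlib

inductive Pat : Type
  | zero : Pat
  | cross : Pat
  | any : Pat
deriving DecidableEq

/-- `X` is a realization of the selective structural pattern `Xbar`:
zero entries are zero, cross entries are nonzero, `any` entries are arbitrary. -/
def IsRealization {α β F : Type*} [Zero F]
    (Xbar : Matrix α β Pat) (X : Matrix α β F) : Prop :=
  ∀ i j, (Xbar i j = Pat.zero → X i j = 0) ∧ (Xbar i j = Pat.cross → X i j ≠ 0)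

/-- The complexification of a real matrix. -/
noncomputable def toC {α β : Type*} (X : Matrix α β ℝ) : Matrix α β ℂ :=
  X.map Complex.ofReal

/-- The pencil `A - λ E` is regular, i.e. `det (A - λ E)` is not identically zero. -/
def RegularPencil {n : ℕ} (E A : Matrix (Fin n) (Fin n) ℝ) : Prop :=
  ∃ μ : ℂ, (toC A - μ • toC E).det ≠ 0

/-- Selective strong structural controllability. -/
def SSSC {n : ℕ} {p : Type*} [Fintype p]
    (Ebar Abar : Matrix (Fin n) (Fin n) Pat) (Bbar : Matrix (Fin n) p Pat) : Prop :=
  ∀ (E A : Matrix (Fin n) (Fin n) ℝ) (B : Matrix (Fin n) p ℝ),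
    IsRealization Ebar E → IsRealization Abar A → RegularPencil E A →
    IsRealization Bbar B →
    ∀ lam : ℂ, (Matrix.fromCols (toC A - lam • toC E) (toC B)).rank = n

/-- Selective strong structural observability. -/
def SSSO {n : ℕ} {m : Type*} [Fintype m]
    (Ebar Abar : Matrix (Fin n) (Fin n) Pat) (Cbar : Matrix m (Fin n) Pat) : Prop :=
  ∀ (E A : Matrix (Fin n) (Fin n) ℝ) (C : Matrix m (Fin n) ℝ),
    IsRealization Ebar E → IsRealization Abar A → RegularPencil E A →
    IsRealization Cbar C →
    ∀ lam : ℂ, (Matrix.fromRows (toC A - lam • toC E) (toC C)).rank = n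

/-- A pattern with no `⊗` entries, i.e. a `{0,×}`-pattern. -/
def ZeroCross {α β : Type*} (X : Matrix α β Pat) : Prop :=
  ∀ i j, X i j ≠ Pat.any

/-- Number of `×` entries of a pattern. -/
def crossCount {α β : Type*} [Fintype α] [Fintype β] (X : Matrix α β Pat) : ℕ :=
  ∑ i, ∑ j, if X i j = Pat.cross then 1 else 0

/-- The pattern `Ā - λ Ē`. -/
def patLam {n : ℕ} (Ebar Abar : Matrix (Fin n) (Fin n) Pat) :
    Matrix (Fin n) (Fin n) Pat :=
  Matrix.of fun i j =>
    match Abar i j, Ebar i j with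
    | Pat.cross, Pat.zero => Pat.cross
    | Pat.zero, Pat.zero => Pat.zero
    | _, _ => Pat.any


/-- A real gain matrix respecting the information pattern `Kbar`. -/
def GainRespects {p m : Type*} (Kbar : Matrix p m Pat) (K : Matrix p m ℝ) : Prop :=
  ∀ i j, Kbar i j = Pat.zero → K i j = 0

/-- `lam` is a selective strong structural fixed mode of `(Ē, Ā, B̄, C̄; K̄)`. -/
def IsSSSFM {n : ℕ} {p m : Type*} [Fintype p] [Fintype m]
    (Ebar Abar : Matrix (Fin n) (Fin n) Pat) (Bbar : Matrix (Fin n) p Pat)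
    (Cbar : Matrix m (Fin n) Pat) (Kbar : Matrix p m Pat) (lam : ℂ) : Prop :=
  ∃ (E A : Matrix (Fin n) (Fin n) ℝ) (B : Matrix (Fin n) p ℝ) (C : Matrix m (Fin n) ℝ),
    IsRealization Ebar E ∧ IsRealization Abar A ∧ RegularPencil E A ∧
    IsRealization Bbar B ∧ IsRealization Cbar C ∧
    ∀ K : Matrix p m ℝ, GainRespects Kbar K →
      (lam • toC E - toC A - toC (B * K * C)).rank < n

/-- `(Ē, Ā, B̄, C̄; K̄)` has a selective strong structural fixed mode. -/
def HasSSSFM {n : ℕ} {p m : Type*} [Fintype p] [Fintype m]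
    (Ebar Abar : Matrix (Fin n) (Fin n) Pat) (Bbar : Matrix (Fin n) p Pat)
    (Cbar : Matrix m (Fin n) Pat) (Kbar : Matrix p m Pat) : Prop :=
  ∃ lam : ℂ, IsSSSFM Ebar Abar Bbar Cbar Kbar lam


open Matrix in
lemma rank_lt_iff_mulVec' {n : ℕ} {r : Type*} [Fintype r]
    (M : Matrix r (Fin n) ℂ) : M.rank < n ↔ ∃ v : Fin n → ℂ, v ≠ 0 ∧ M *ᵥ v = 0 := by
  have hrn := M.mulVecLin.finrank_range_add_finrank_ker
  rw [Module.finrank_pi] at hrn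
  simp only [Fintype.card_fin] at hrn
  rw [Matrix.rank]
  constructor
  · intro hlt
    have hker : LinearMap.ker M.mulVecLin ≠ ⊥ := by
      intro hbot
      rw [hbot, finrank_bot] at hrn
      omega
    obtain ⟨v, hv, hv0⟩ := Submodule.exists_mem_ne_zero_of_ne_bot hker
    exact ⟨v, hv0, hv⟩
  · rintro ⟨v, hv0, hv⟩
    have hker : LinearMap.ker M.mulVecLin ≠ ⊥ := by
      intro hbot
      have hmem : v ∈ LinearMap.ker M.mulVecLin := by simpa [LinearMap.mem_ker] using hv
      rw [hbot, Submodule.mem_bot] at hmem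
      exact hv0 hmem
    have hne : Module.finrank ℂ (LinearMap.ker M.mulVecLin) ≠ 0 := by
      rw [Ne, Submodule.finrank_eq_zero]
      exact hker
    omega

open Matrix in
lemma rank_lt_iff_vecMul' {n : ℕ} {c : Type*} [Fintype c]
    (M : Matrix (Fin n) c ℂ) : M.rank < n ↔ ∃ v : Fin n → ℂ, v ≠ 0 ∧ v ᵥ* M = 0 := by
  rw [← Matrix.rank_transpose, rank_lt_iff_mulVec']
  simp [Matrix.mulVec_transpose]

lemma toC_mul' {α β γ : Type*} [Fintype β] (X : Matrix α β ℝ) (Y : Matrix β γ ℝ) :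
    toC (X * Y) = toC X * toC Y := by
  ext i j
  simp [toC, Matrix.mul_apply]

lemma exists_realization' {α β : Type*} (X : Matrix α β Pat) :
    ∃ M : Matrix α β ℝ, IsRealization X M := by
  refine ⟨Matrix.of fun i j => if X i j = Pat.cross then 1 else 0, fun i j => ⟨fun h => ?_, fun h => ?_⟩⟩
  · simp [h]
  · simp [h]

open Matrix

/-- if `(Ē, Ā, B̄, C̄; K̄)` has no selective strong structural fixed modes,
then `(Ē, Ā, B̄)` is SSSC and `(Ē, Ā, C̄)` is SSSO. -/
theorem no_SSSFM_implies_SSSC_and_SSSO {n : ℕ} {p m : Type*} [Fintype p] [Fintype m]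
    (Ebar Abar : Matrix (Fin n) (Fin n) Pat) (Bbar : Matrix (Fin n) p Pat)
    (Cbar : Matrix m (Fin n) Pat) (Kbar : Matrix p m Pat)
    (h : ¬ HasSSSFM Ebar Abar Bbar Cbar Kbar) :
    SSSC Ebar Abar Bbar ∧ SSSO Ebar Abar Cbar := by
  constructor
  · -- SSSC
    intro E A B hE hA hreg hB lam
    by_contra hrank
    have hle : (Matrix.fromCols (toC A - lam • toC E) (toC B)).rank ≤ n := by
      simpa using (Matrix.fromCols (toC A - lam • toC E) (toC B)).rank_le_card_height
    have hlt : (Matrix.fromCols (toC A - lam • toC E) (toC B)).rank < n :=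
      lt_of_le_of_ne hle hrank
    obtain ⟨v, hv0, hv⟩ := (rank_lt_iff_vecMul' _).mp hlt
    rw [Matrix.vecMul_fromCols] at hv
    have h1 : v ᵥ* (toC A - lam • toC E) = 0 := funext fun j => congrFun hv (Sum.inl j)
    have h2 : v ᵥ* toC B = 0 := funext fun j => congrFun hv (Sum.inr j)
    obtain ⟨C0, hC0⟩ := exists_realization' Cbar
    refine h ⟨lam, E, A, B, C0, hE, hA, hreg, hB, hC0, fun K hK => ?_⟩
    refine (rank_lt_iff_vecMul' _).mpr ⟨v, hv0, ?_⟩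
    have key : lam • toC E - toC A = -(toC A - lam • toC E) := (neg_sub _ _).symm
    rw [Matrix.vecMul_sub, key, Matrix.vecMul_neg, h1, Matrix.mul_assoc, toC_mul',
      ← Matrix.vecMul_vecMul, h2, Matrix.zero_vecMul]
    simp
  · -- SSSO
    intro E A C hE hA hreg hC lam
    by_contra hrank
    have hle : (Matrix.fromRows (toC A - lam • toC E) (toC C)).rank ≤ n := by
      simpa using (Matrix.fromRows (toC A - lam • toC E) (toC C)).rank_le_card_width
    have hlt : (Matrix.fromRows (toC A - lam • toC E) (toC C)).rank < n :=
      lt_of_le_of_ne hle hrank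
    obtain ⟨v, hv0, hv⟩ := (rank_lt_iff_mulVec' _).mp hlt
    rw [Matrix.fromRows_mulVec] at hv
    have h1 : (toC A - lam • toC E) *ᵥ v = 0 := funext fun j => congrFun hv (Sum.inl j)
    have h2 : toC C *ᵥ v = 0 := funext fun j => congrFun hv (Sum.inr j)
    obtain ⟨B0, hB0⟩ := exists_realization' Bbar
    refine h ⟨lam, E, A, B0, C, hE, hA, hreg, hB0, hC, fun K hK => ?_⟩
    refine (rank_lt_iff_mulVec' _).mpr ⟨v, hv0, ?_⟩
    have key : lam • toC E - toC A = -(toC A - lam • toC E) := (neg_sub _ _).symm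
    rw [Matrix.sub_mulVec, key, Matrix.neg_mulVec, h1, Matrix.mul_assoc, toC_mul',
      ← Matrix.mulVec_mulVec, toC_mul', ← Matrix.mulVec_mulVec, h2,
      Matrix.mulVec_zero, Matrix.mulVec_zero]
    simp
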